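/- arXiv:2602.01251 — 2 statements merged into one kernel-verified Lean document; each statement's English description precedes it below -/
import Mathlib

section
/- Let α ∈ (0,1], T > 0, and C ≥ 0. Let u : ℝ → ℝ be continuous and nonnegative on [0,T], and suppose u(t) ≤ C · ∫₀^t (t−s)^{α−1} u(s) ds for all t ∈ [0,T]. Then u(t) = 0 for all t ∈ [0,T]. -/
open MeasureTheory Set intervalIntegral

/-- Fractional Grönwall-type vanishing lemma for the Abel kernel `(t-s)^(α-1)`:
if `u ≥ 0` is continuous on `[0,T]` and `u(t) ≤ C ∫₀ᵗ (t-s)^(α-1) u(s) ds` there,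
then `u ≡ 0` on `[0,T]`. -/
theorem fractional_gronwall_vanishing
    (α : ℝ) (hα : α ∈ Set.Ioc (0 : ℝ) 1) (T : ℝ) (hT : 0 < T) (C : ℝ) (hC : 0 ≤ C)
    (u : ℝ → ℝ)
    (hu : ContinuousOn u (Set.Icc (0 : ℝ) T))
    (hnonneg : ∀ t ∈ Set.Icc (0 : ℝ) T, 0 ≤ u t)
    (hineq : ∀ t ∈ Set.Icc (0 : ℝ) T,
      u t ≤ C * ∫ s in (0 : ℝ)..t, (t - s) ^ (α - 1) * u s) :
    ∀ t ∈ Set.Icc (0 : ℝ) T, u t = 0 := by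
  obtain ⟨hα0, hα1⟩ := hα
  have hαm1 : (-1 : ℝ) < α - 1 := by linarith
  -- choice of step size
  set h : ℝ := (α / (2 * (C + 1))) ^ (α⁻¹ : ℝ) with hh
  have hbase : 0 < α / (2 * (C + 1)) := by positivity
  have hhpos : 0 < h := Real.rpow_pos_of_pos hbase _
  have hhα : h ^ α = α / (2 * (C + 1)) := Real.rpow_inv_rpow hbase.le (ne_of_gt hα0)
  have hChα : C * h ^ α / α ≤ 1 / 2 := by
    rw [hhα]
    have hα' : α ≠ 0 := ne_of_gt hα0
    have heq : C * (α / (2 * (C + 1))) / α = C / (2 * (C + 1)) := by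
      field_simp
    rw [heq, div_le_div_iff₀ (by positivity) two_pos]
    linarith
  -- key bootstrap step
  have key : ∀ a ∈ Set.Icc (0 : ℝ) T, (∀ s ∈ Set.Icc (0 : ℝ) a, u s = 0) →
      ∀ t ∈ Set.Icc (0 : ℝ) (min T (a + h)), u t = 0 := by
    intro a ha hzero
    set b : ℝ := min T (a + h) with hb
    have hab : a ≤ b := le_min ha.2 (by linarith)
    have hbT : b ≤ T := min_le_left _ _
    have hbah : b ≤ a + h := min_le_right _ _
    -- maximizer of u on [a,b]
    obtain ⟨x₀, hx₀, hmax⟩ := isCompact_Icc.exists_isMaxOn ⟨a, left_mem_Icc.2 hab⟩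
      (hu.mono (fun s hs => ⟨le_trans ha.1 hs.1, le_trans hs.2 hbT⟩))
    set M : ℝ := u x₀ with hM
    have hMnonneg : 0 ≤ M := hnonneg x₀ ⟨le_trans ha.1 hx₀.1, le_trans hx₀.2 hbT⟩
    have hM0 : M = 0 := by
      rcases le_or_gt x₀ a with hxa | hxa
      · exact hzero x₀ ⟨le_trans ha.1 hx₀.1, hxa⟩
      · -- estimate at t = x₀
        set t : ℝ := x₀ with ht
        have htT : t ∈ Set.Icc (0 : ℝ) T := ⟨le_trans ha.1 hx₀.1, le_trans hx₀.2 hbT⟩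
        have h0t : (0 : ℝ) ≤ t := htT.1
        -- integrability of the kernel
        have K_int : IntervalIntegrable (fun s => (t - s) ^ (α - 1)) volume 0 t := by
          have := (intervalIntegrable_rpow' (a := t - 0) (b := t - t) hαm1).comp_sub_left t
          simpa using this
        have Ku_int : IntervalIntegrable (fun s => (t - s) ^ (α - 1) * u s) volume 0 t := by
          apply K_int.mul_continuousOn
          apply hu.mono
          rw [uIcc_of_le h0t]
          exact Set.Icc_subset_Icc le_rfl htT.2
        have Ku_int1 : IntervalIntegrable (fun s => (t - s) ^ (α - 1) * u s) volume 0 a :=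
          Ku_int.mono_set (by rw [uIcc_of_le h0t, uIcc_of_le ha.1]; exact Set.Icc_subset_Icc le_rfl hxa.le)
        have Ku_int2 : IntervalIntegrable (fun s => (t - s) ^ (α - 1) * u s) volume a t :=
          Ku_int.mono_set (by rw [uIcc_of_le h0t, uIcc_of_le hxa.le]; exact Set.Icc_subset_Icc ha.1 le_rfl)
        have KM_int : IntervalIntegrable (fun s => (t - s) ^ (α - 1) * M) volume a t :=
          (K_int.mono_set (by rw [uIcc_of_le h0t, uIcc_of_le hxa.le]; exact Set.Icc_subset_Icc ha.1 le_rfl)).mul_const M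
        -- first part vanishes
        have int1 : (∫ s in (0:ℝ)..a, (t - s) ^ (α - 1) * u s) = 0 := by
          rw [intervalIntegral.integral_congr (g := fun _ => (0:ℝ))
            (fun s hs => by
              rw [uIcc_of_le ha.1] at hs
              simp [hzero s hs])]
          simp
        -- split the integral
        have split : (∫ s in (0:ℝ)..t, (t - s) ^ (α - 1) * u s)
            = (∫ s in (0:ℝ)..a, (t - s) ^ (α - 1) * u s)
              + ∫ s in a..t, (t - s) ^ (α - 1) * u s :=
          (intervalIntegral.integral_add_adjacent_intervals Ku_int1 Ku_int2).symm
        -- bound the second part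
        have bound2 : (∫ s in a..t, (t - s) ^ (α - 1) * u s)
            ≤ ∫ s in a..t, (t - s) ^ (α - 1) * M := by
          apply intervalIntegral.integral_mono_on hxa.le Ku_int2 KM_int
          intro s hs
          have hker : (0:ℝ) ≤ (t - s) ^ (α - 1) := Real.rpow_nonneg (by linarith [hs.2]) _
          have hus : u s ≤ M := hmax ⟨hs.1, le_trans hs.2 hx₀.2⟩
          exact mul_le_mul_of_nonneg_left hus hker
        -- compute the kernel integral
        have kcalc : (∫ s in a..t, (t - s) ^ (α - 1)) = (t - a) ^ α / α := by
          rw [intervalIntegral.integral_comp_sub_left (fun x => x ^ (α - 1)) t]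
          rw [sub_self]
          rw [integral_rpow (Or.inl hαm1)]
          rw [Real.zero_rpow (by linarith : α - 1 + 1 ≠ 0)]
          rw [sub_add_cancel]
          ring_nf
        have int2 : (∫ s in a..t, (t - s) ^ (α - 1) * M) = (t - a) ^ α / α * M := by
          rw [intervalIntegral.integral_mul_const, kcalc]
        -- (t-a)^α ≤ h^α
        have hta : (t - a) ^ α ≤ h ^ α := by
          apply Real.rpow_le_rpow (by linarith) (by linarith [hx₀.2, hbah]) hα0.le
        -- put together
        have hest : M ≤ C * h ^ α / α * M := by
          calc M = u t := rfl
            _ ≤ C * ∫ s in (0:ℝ)..t, (t - s) ^ (α - 1) * u s := hineq t htT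
            _ = C * ((∫ s in (0:ℝ)..a, (t - s) ^ (α - 1) * u s)
                  + ∫ s in a..t, (t - s) ^ (α - 1) * u s) := by rw [split]
            _ = C * ∫ s in a..t, (t - s) ^ (α - 1) * u s := by rw [int1, zero_add]
            _ ≤ C * ((t - a) ^ α / α * M) := by
                rw [← int2]; exact mul_le_mul_of_nonneg_left bound2 hC
            _ ≤ C * (h ^ α / α * M) := by
                apply mul_le_mul_of_nonneg_left _ hC
                apply mul_le_mul_of_nonneg_right _ hMnonneg
                gcongr
            _ = C * h ^ α / α * M := by ring
        nlinarith [hChα, hMnonneg]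
    intro t htb
    rcases le_or_gt t a with hta | hta
    · exact hzero t ⟨htb.1, hta⟩
    · have hle : u t ≤ M := hmax ⟨hta.le, htb.2⟩
      have hge := hnonneg t ⟨htb.1, le_trans htb.2 hbT⟩
      rw [hM0] at hle
      linarith
  -- u 0 = 0
  have h0 : u 0 = 0 := by
    have := hineq 0 ⟨le_rfl, hT.le⟩
    simp at this
    exact le_antisymm this (hnonneg 0 ⟨le_rfl, hT.le⟩)
  -- induction
  have main : ∀ n : ℕ, ∀ t ∈ Set.Icc (0 : ℝ) (min T (n * h)), u t = 0 := by
    intro n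
    induction n with
    | zero =>
      intro t ht
      simp only [Nat.cast_zero, zero_mul, min_eq_right hT.le] at ht
      have : t = 0 := le_antisymm ht.2 ht.1
      rw [this]; exact h0
    | succ n ih =>
      intro t ht
      have ha : min T ((n : ℝ) * h) ∈ Set.Icc (0 : ℝ) T :=
        ⟨le_min hT.le (by positivity), min_le_left _ _⟩
      have step := key (min T ((n : ℝ) * h)) ha ih
      apply step
      refine ⟨ht.1, le_trans ht.2 ?_⟩
      apply le_min (min_le_left _ _)
      rcases le_total ((n : ℝ) * h) T with hc | hc
      · rw [min_eq_right hc]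
        push_cast
        calc min T (((n : ℝ) + 1) * h) ≤ ((n : ℝ) + 1) * h := min_le_right _ _
          _ = (n : ℝ) * h + h := by ring
      · rw [min_eq_left hc]
        push_cast
        exact le_trans (min_le_left _ _) (by linarith)
  intro t ht
  obtain ⟨n, hn⟩ := exists_nat_ge (T / h)
  have hTn : T ≤ n * h := by
    rw [div_le_iff₀ hhpos] at hn
    exact hn
  have : min T ((n : ℝ) * h) = T := min_eq_left hTn
  exact main n t (by rw [this]; exact ht)
end

section
/- Let α ∈ (0,1], t_f > 0, q ∈ ℕ, and μ₁, μ₂ > 0. Let A : ℝ → (q×q real matrices) be continuous with operator norm ‖A(t)‖ ≤ μ₁ for all t ∈ [0, t_f], let G : ℝ^q × ℝ → ℝ^q be continuous and satisfy ‖G(x,t) − G(y,t)‖ ≤ μ₂·‖x − y‖ for all x, y ∈ ℝ^q and t ∈ [0, t_f], and let v : ℝ → ℝ^q be continuous. Then for every x₀ ∈ ℝ^q there exists a continuous function x̄ : [0, t_f] → ℝ^q satisfying the Volterra integral equation x̄(t) = x₀ + (1/Γ(α)) ∫₀^t (t−s)^{α−1} ( A(s)·x̄(s) + G(x̄(s),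 s) + v(s) ) ds for all t ∈ [0, t_f]. -/
open MeasureTheory Set Matrix intervalIntegral NNReal
open scoped Interval

section VolterraAux

variable {E : Type*} [NormedAddCommGroup E] [NormedSpace ℝ E]


lemma kernel_ii {α τ a b : ℝ} (hα : 0 < α) :
    IntervalIntegrable (fun s => (τ - s) ^ (α - 1)) volume a b := by
  have h := intervalIntegral.intervalIntegrable_rpow' (a := τ - a) (b := τ - b)
    (r := α - 1) (by linarith)
  have h2 := h.comp_sub_left τ
  simpa using h2

lemma smul_kernel_ii {α τ a b : ℝ} (hα : 0 < α) {g : ℝ → E} (hg : Continuous g) :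
    IntervalIntegrable (fun s => (τ - s) ^ (α - 1) • g s) volume a b := by
  obtain ⟨K, hK⟩ := isCompact_uIcc.exists_bound_of_continuousOn (hg.continuousOn (s := uIcc a b))
  have hker := kernel_ii (τ := τ) (a := a) (b := b) hα
  have hk : IntervalIntegrable (fun s => K * |(τ - s) ^ (α - 1)|) volume a b :=
    hker.abs.const_mul K
  rw [intervalIntegrable_iff] at hk hker ⊢
  refine hk.mono' (hker.aestronglyMeasurable.smul hg.aestronglyMeasurable) ?_
  refine (ae_restrict_iff' measurableSet_uIoc).2 (Filter.Eventually.of_forall fun s hs => ?_)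
  have hs' : s ∈ uIcc a b := Ioc_subset_Icc_self hs
  rw [norm_smul]
  calc ‖(τ - s) ^ (α - 1)‖ * ‖g s‖ ≤ ‖(τ - s) ^ (α - 1)‖ * K :=
        mul_le_mul_of_nonneg_left (hK s hs') (norm_nonneg _)
    _ = K * |(τ - s) ^ (α - 1)| := by rw [Real.norm_eq_abs, mul_comm]

lemma kernel_integral_eq {α τ a b : ℝ} (hα : 0 < α) :
    ∫ s in a..b, (τ - s) ^ (α - 1) = ((τ - a) ^ α - (τ - b) ^ α) / α := by
  rw [intervalIntegral.integral_comp_sub_left (fun x => x ^ (α - 1)) τ,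
    integral_rpow (Or.inl (by linarith))]
  norm_num



lemma norm_kernel_smul_le {α τ a b K : ℝ} (hα : 0 < α) (hab : a ≤ b) (hbτ : b ≤ τ)
    {g : ℝ → E} (hK0 : 0 ≤ K) (hK : ∀ s ∈ Ioc a b, ‖g s‖ ≤ K) :
    ‖∫ s in a..b, (τ - s) ^ (α - 1) • g s‖ ≤ K * (((τ - a) ^ α - (τ - b) ^ α) / α) := by
  have hbd : IntervalIntegrable (fun s => K * (τ - s) ^ (α - 1)) volume a b :=
    (kernel_ii hα).const_mul K
  have hae : ∀ᵐ t ∂volume.restrict (Ι a b),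
      ‖(τ - t) ^ (α - 1) • g t‖ ≤ K * (τ - t) ^ (α - 1) := by
    refine (ae_restrict_iff' measurableSet_uIoc).2 (Filter.Eventually.of_forall fun t ht => ?_)
    rw [uIoc_of_le hab] at ht
    have h1 : (0:ℝ) ≤ (τ - t) ^ (α - 1) := Real.rpow_nonneg (by linarith [ht.2]) _
    rw [norm_smul, Real.norm_eq_abs, abs_of_nonneg h1, mul_comm K]
    exact mul_le_mul_of_nonneg_left (hK t ht) h1
  have h := intervalIntegral.norm_integral_le_abs_of_norm_le hae hbd
  rw [intervalIntegral.integral_const_mul, kernel_integral_eq hα] at h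
  have hnn : 0 ≤ ((τ - a) ^ α - (τ - b) ^ α) / α := by
    have : (τ - b) ^ α ≤ (τ - a) ^ α :=
      Real.rpow_le_rpow (by linarith) (by linarith) hα.le
    apply div_nonneg (by linarith) hα.le
  rwa [abs_of_nonneg (mul_nonneg hK0 hnn)] at h

lemma real_rpow_add_le {x y p : ℝ} (hx : 0 ≤ x) (hy : 0 ≤ y) (hp : 0 ≤ p) (hp1 : p ≤ 1) :
    (x + y) ^ p ≤ x ^ p + y ^ p := by
  have h := NNReal.rpow_add_le_add_rpow x.toNNReal y.toNNReal hp hp1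
  have h2 := NNReal.coe_le_coe.2 h
  simpa [NNReal.coe_rpow, Real.coe_toNNReal x hx, Real.coe_toNNReal y hy,
    Real.toNNReal_add hx hy] using h2

lemma holder_est {α t_f K : ℝ} (hα : 0 < α) (hα1 : α ≤ 1) {g : ℝ → E} (hg : Continuous g)
    (hK0 : 0 ≤ K) (hK : ∀ s ∈ Icc (0:ℝ) t_f, ‖g s‖ ≤ K) {t₁ t₂ : ℝ}
    (h0 : 0 ≤ t₁) (h12 : t₁ ≤ t₂) (h2 : t₂ ≤ t_f) :
    ‖(∫ s in (0:ℝ)..t₂, (t₂ - s) ^ (α - 1) • g s) -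
        ∫ s in (0:ℝ)..t₁, (t₁ - s) ^ (α - 1) • g s‖ ≤ 2 * K / α * (t₂ - t₁) ^ α := by
  have i1 : IntervalIntegrable (fun s => (t₂ - s) ^ (α - 1) • g s) volume 0 t₁ :=
    smul_kernel_ii hα hg
  have i2 : IntervalIntegrable (fun s => (t₂ - s) ^ (α - 1) • g s) volume t₁ t₂ :=
    smul_kernel_ii hα hg
  have i3 : IntervalIntegrable (fun s => (t₁ - s) ^ (α - 1) • g s) volume 0 t₁ :=
    smul_kernel_ii hα hg
  have hsplit := intervalIntegral.integral_add_adjacent_intervals i1 i2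
  rw [← hsplit]
  have key : (∫ s in (0:ℝ)..t₁, (t₂ - s) ^ (α - 1) • g s) +
      (∫ s in t₁..t₂, (t₂ - s) ^ (α - 1) • g s) -
      (∫ s in (0:ℝ)..t₁, (t₁ - s) ^ (α - 1) • g s) =
      ((∫ s in (0:ℝ)..t₁, (t₂ - s) ^ (α - 1) • g s) -
        (∫ s in (0:ℝ)..t₁, (t₁ - s) ^ (α - 1) • g s)) +
      (∫ s in t₁..t₂, (t₂ - s) ^ (α - 1) • g s) := by abel
  rw [key]
  have hb2 : ‖∫ s in t₁..t₂, (t₂ - s) ^ (α - 1) • g s‖ ≤ K * ((t₂ - t₁) ^ α / α) := by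
    have := norm_kernel_smul_le (g := g) hα h12 le_rfl hK0
      (fun s hs => hK s ⟨le_trans h0 hs.1.le, hs.2.trans h2⟩)
    simpa [Real.zero_rpow hα.ne'] using this
  have hb1 : ‖(∫ s in (0:ℝ)..t₁, (t₂ - s) ^ (α - 1) • g s) -
      (∫ s in (0:ℝ)..t₁, (t₁ - s) ^ (α - 1) • g s)‖ ≤ K * ((t₂ - t₁) ^ α / α) := by
    rw [← intervalIntegral.integral_sub i1 i3]
    have hbd : IntervalIntegrable
        (fun s => K * ((t₁ - s) ^ (α - 1) - (t₂ - s) ^ (α - 1))) volume 0 t₁ :=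
      ((kernel_ii hα).sub (kernel_ii hα)).const_mul K
    have hne : ∀ᵐ s ∂volume.restrict (Ι (0:ℝ) t₁), s ≠ t₁ := by
      refine ae_restrict_of_ae ?_
      rw [ae_iff]
      simpa using Real.volume_singleton (x := t₁)
    have hmem : ∀ᵐ s ∂volume.restrict (Ι (0:ℝ) t₁), s ∈ Ι (0:ℝ) t₁ :=
      self_mem_ae_restrict measurableSet_uIoc
    have hae : ∀ᵐ s ∂volume.restrict (Ι (0:ℝ) t₁),
        ‖(t₂ - s) ^ (α - 1) • g s - (t₁ - s) ^ (α - 1) • g s‖ ≤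
          K * ((t₁ - s) ^ (α - 1) - (t₂ - s) ^ (α - 1)) := by
      filter_upwards [hne, hmem] with s hsne hsmem
      rw [uIoc_of_le h0] at hsmem
      have hst : s < t₁ := lt_of_le_of_ne hsmem.2 hsne
      have hddn : (t₂ - s) ^ (α - 1) ≤ (t₁ - s) ^ (α - 1) :=
        Real.rpow_le_rpow_of_nonpos (by linarith) (by linarith) (by linarith)
      rw [← sub_smul, norm_smul, Real.norm_eq_abs, abs_sub_comm,
        abs_of_nonneg (by linarith), mul_comm K]
      refine mul_le_mul_of_nonneg_left ?_ (by linarith)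
      exact hK s ⟨hsmem.1.le, by linarith⟩
    have h := intervalIntegral.norm_integral_le_abs_of_norm_le hae hbd
    rw [intervalIntegral.integral_const_mul, intervalIntegral.integral_sub
      (kernel_ii hα) (kernel_ii hα), kernel_integral_eq hα, kernel_integral_eq hα] at h
    have e0 : (t₁ - (0:ℝ)) = t₁ := by ring
    have hX : ((t₁ - 0) ^ α - (t₁ - t₁) ^ α) / α - ((t₂ - 0) ^ α - (t₂ - t₁) ^ α) / α =
        (t₁ ^ α - t₂ ^ α + (t₂ - t₁) ^ α) / α := by
      rw [sub_zero, sub_zero, sub_self, Real.zero_rpow hα.ne']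
      ring
    rw [hX] at h
    have hup : t₁ ^ α ≤ t₂ ^ α := Real.rpow_le_rpow h0 h12 hα.le
    have hlo : t₂ ^ α ≤ t₁ ^ α + (t₂ - t₁) ^ α := by
      have := real_rpow_add_le (x := t₁) (y := t₂ - t₁) h0 (by linarith) hα.le hα1
      simpa using this
    have habs : |K * ((t₁ ^ α - t₂ ^ α + (t₂ - t₁) ^ α) / α)| ≤ K * ((t₂ - t₁) ^ α / α) := by
      rw [abs_of_nonneg (mul_nonneg hK0 (div_nonneg (by linarith) hα.le))]
      gcongr
      linarith
    exact h.trans habs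
  calc ‖_ + _‖ ≤ _ + _ := norm_add_le _ _
    _ ≤ K * ((t₂ - t₁) ^ α / α) + K * ((t₂ - t₁) ^ α / α) := add_le_add hb1 hb2
    _ = 2 * K / α * (t₂ - t₁) ^ α := by ring



lemma I_continuousOn {α t_f : ℝ} (hα : 0 < α) (hα1 : α ≤ 1)
    {g : ℝ → E} (hg : Continuous g) :
    ContinuousOn (fun t => ∫ s in (0:ℝ)..t, (t - s) ^ (α - 1) • g s) (Icc 0 t_f) := by
  obtain ⟨K₀, hK₀⟩ :=
    (isCompact_Icc (a := (0:ℝ)) (b := t_f)).exists_bound_of_continuousOn hg.continuousOn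
  set K := max K₀ 0 with hKdef
  have hK0 : (0:ℝ) ≤ K := le_max_right _ _
  have hK : ∀ s ∈ Icc (0:ℝ) t_f, ‖g s‖ ≤ K := fun s hs => (hK₀ s hs).trans (le_max_left _ _)
  set C := 2 * K / α + 1 with hC
  have hC1 : (1:ℝ) ≤ C := le_add_of_nonneg_left (by positivity)
  have hCpos : (0:ℝ) < C := lt_of_lt_of_le one_pos hC1
  intro t ht
  rw [Metric.continuousWithinAt_iff]
  intro ε hε
  have hεC : 0 < ε / C := div_pos hε hCpos
  refine ⟨(ε / C) ^ α⁻¹, Real.rpow_pos_of_pos hεC _, fun {t'} ht' hd => ?_⟩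
  have hdist : dist (∫ s in (0:ℝ)..t', (t' - s) ^ (α - 1) • g s)
      (∫ s in (0:ℝ)..t, (t - s) ^ (α - 1) • g s) ≤ 2 * K / α * |t' - t| ^ α := by
    rcases le_total t' t with h | h
    · rw [dist_comm, dist_eq_norm]
      have := holder_est hα hα1 hg hK0 hK ht'.1 h ht.2
      rwa [abs_of_nonpos (by linarith), neg_sub]
    · rw [dist_eq_norm]
      have := holder_est hα hα1 hg hK0 hK ht.1 h ht'.2
      rwa [abs_of_nonneg (by linarith)]
  have hpow : |t' - t| ^ α < ε / C := by
    have h1 : |t' - t| ^ α < ((ε / C) ^ α⁻¹) ^ α :=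
      Real.rpow_lt_rpow (abs_nonneg _) hd hα
    rwa [← Real.rpow_mul hεC.le, inv_mul_cancel₀ hα.ne', Real.rpow_one] at h1
  have hfin : 2 * K / α * |t' - t| ^ α < ε := by
    have hCe : C * (ε / C) = ε := mul_div_cancel₀ ε hCpos.ne'
    have h2 : 2 * K / α * |t' - t| ^ α ≤ (C - 1) * (ε / C) := by
      have : (0:ℝ) ≤ 2 * K / α := by positivity
      have hb : |t' - t| ^ α ≤ ε / C := hpow.le
      calc 2 * K / α * |t' - t| ^ α ≤ 2 * K / α * (ε / C) :=
            mul_le_mul_of_nonneg_left hb this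
        _ = (C - 1) * (ε / C) := by rw [hC]; ring
    have h3 : (C - 1) * (ε / C) < C * (ε / C) := by
      apply mul_lt_mul_of_pos_right (by linarith) hεC
    linarith
  exact lt_of_le_of_lt hdist hfin



lemma exp_integral_eval {lam m : ℝ} (hlam : 0 < lam) :
    ∫ s in (0:ℝ)..m, Real.exp (lam * s) = (Real.exp (lam * m) - 1) / lam := by
  rw [intervalIntegral.integral_comp_mul_left (fun x => Real.exp x) hlam.ne']
  rw [integral_exp]
  simp [smul_eq_mul, div_eq_inv_mul]

lemma weighted_bound {α δ lam t M : ℝ} (hα : 0 < α) (hα1 : α ≤ 1) (hδ : 0 < δ)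
    (hlam : 0 < lam) (ht : 0 ≤ t) {h : ℝ → E} (hh : Continuous h) (hM : 0 ≤ M)
    (hb : ∀ s ∈ Icc (0:ℝ) t, ‖h s‖ ≤ M * Real.exp (lam * s)) :
    ‖∫ s in (0:ℝ)..t, (t - s) ^ (α - 1) • h s‖ ≤
      M * Real.exp (lam * t) * (δ ^ α / α + δ ^ (α - 1) / lam) := by
  set m := max 0 (t - δ) with hmdef
  have hm0 : (0:ℝ) ≤ m := le_max_left _ _
  have hmt : m ≤ t := max_le ht (by linarith)
  have hmδ : t - δ ≤ m := le_max_right _ _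
  have i1 : IntervalIntegrable (fun s => (t - s) ^ (α - 1) • h s) volume 0 m :=
    smul_kernel_ii hα hh
  have i2 : IntervalIntegrable (fun s => (t - s) ^ (α - 1) • h s) volume m t :=
    smul_kernel_ii hα hh
  rw [← intervalIntegral.integral_add_adjacent_intervals i1 i2]
  have hexp_pos : (0:ℝ) < Real.exp (lam * t) := Real.exp_pos _
  -- piece 2
  have hb2 : ‖∫ s in m..t, (t - s) ^ (α - 1) • h s‖ ≤
      M * Real.exp (lam * t) * (δ ^ α / α) := by
    have hKb : ∀ s ∈ Ioc m t, ‖h s‖ ≤ M * Real.exp (lam * t) := by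
      intro s hs
      refine (hb s ⟨le_trans hm0 hs.1.le, hs.2⟩).trans ?_
      exact mul_le_mul_of_nonneg_left (Real.exp_le_exp.2 (by nlinarith [hs.2])) hM
    have := norm_kernel_smul_le (g := h) hα hmt le_rfl
      (mul_nonneg hM hexp_pos.le) hKb
    rw [sub_self, Real.zero_rpow hα.ne', sub_zero] at this
    refine this.trans ?_
    gcongr
    · linarith
  -- piece 1
  have hb1 : ‖∫ s in (0:ℝ)..m, (t - s) ^ (α - 1) • h s‖ ≤
      M * Real.exp (lam * t) * (δ ^ (α - 1) / lam) := by
    have hbd : IntervalIntegrable (fun s => M * δ ^ (α - 1) * Real.exp (lam * s)) volume 0 m :=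
      (Real.continuous_exp.comp (continuous_const.mul continuous_id)).intervalIntegrable 0 m
        |>.const_mul _
    have hae : ∀ᵐ s ∂volume.restrict (Ι (0:ℝ) m),
        ‖(t - s) ^ (α - 1) • h s‖ ≤ M * δ ^ (α - 1) * Real.exp (lam * s) := by
      refine (ae_restrict_iff' measurableSet_uIoc).2 (Filter.Eventually.of_forall fun s hs => ?_)
      rw [uIoc_of_le hm0] at hs
      have hmpos : (0:ℝ) < m := lt_of_lt_of_le hs.1 hs.2
      have htδ : 0 ≤ t - δ := by
        by_contra hcon
        push_neg at hcon
        have : m = 0 := max_eq_left (by linarith)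
        linarith
      have hmeq : m = t - δ := max_eq_right htδ
      have hker : (t - s) ^ (α - 1) ≤ δ ^ (α - 1) := by
        refine Real.rpow_le_rpow_of_nonpos hδ ?_ (by linarith)
        have : s ≤ m := hs.2
        rw [hmeq] at this
        linarith
      have hst : s ≤ t := le_trans hs.2 hmt
      have hker0 : (0:ℝ) ≤ (t - s) ^ (α - 1) :=
        Real.rpow_nonneg (by linarith) _
      rw [norm_smul, Real.norm_eq_abs, abs_of_nonneg hker0]
      calc (t - s) ^ (α - 1) * ‖h s‖ ≤ δ ^ (α - 1) * (M * Real.exp (lam * s)) := by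
            refine mul_le_mul hker (hb s ⟨hs.1.le, by linarith⟩) (norm_nonneg _)
              (Real.rpow_nonneg hδ.le _)
        _ = M * δ ^ (α - 1) * Real.exp (lam * s) := by ring
    have h1 := intervalIntegral.norm_integral_le_abs_of_norm_le hae hbd
    rw [intervalIntegral.integral_const_mul, exp_integral_eval hlam] at h1
    refine h1.trans ?_
    have hδα : (0:ℝ) ≤ δ ^ (α - 1) := Real.rpow_nonneg hδ.le _
    have hemdl : (Real.exp (lam * m) - 1) / lam ≤ Real.exp (lam * t) / lam := by
      gcongr
      · linarith [Real.exp_le_exp.2 (mul_le_mul_of_nonneg_left hmt hlam.le)]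
    have hnn : 0 ≤ (Real.exp (lam * m) - 1) / lam := by
      apply div_nonneg ?_ hlam.le
      have := Real.one_le_exp (mul_nonneg hlam.le hm0)
      linarith
    rw [abs_of_nonneg (mul_nonneg (mul_nonneg hM hδα) hnn)]
    calc M * δ ^ (α - 1) * ((Real.exp (lam * m) - 1) / lam)
        ≤ M * δ ^ (α - 1) * (Real.exp (lam * t) / lam) :=
          mul_le_mul_of_nonneg_left hemdl (mul_nonneg hM hδα)
      _ = M * Real.exp (lam * t) * (δ ^ (α - 1) / lam) := by ring
  calc ‖_ + _‖ ≤ _ + _ := norm_add_le _ _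
    _ ≤ M * Real.exp (lam * t) * (δ ^ (α - 1) / lam) + M * Real.exp (lam * t) * (δ ^ α / α) :=
        add_le_add hb1 hb2
    _ = M * Real.exp (lam * t) * (δ ^ α / α + δ ^ (α - 1) / lam) := by ring



theorem volterra_aux [CompleteSpace E]
    (α : ℝ) (hα : 0 < α) (hα1 : α ≤ 1) (t_f : ℝ) (ht_f : 0 < t_f)
    (c L : ℝ) (hc : 0 < c) (hL : 0 < L)
    (f : ℝ → E → E) (hfc : Continuous fun p : ℝ × E => f p.1 p.2)
    (hf : ∀ s ∈ Icc (0:ℝ) t_f, ∀ x y : E, ‖f s x - f s y‖ ≤ L * ‖x - y‖)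
    (x₀ : E) :
    ∃ xbar : ℝ → E, Continuous xbar ∧ ∀ t ∈ Icc (0:ℝ) t_f,
      xbar t = x₀ + c • ∫ s in (0:ℝ)..t, ((t - s) ^ (α - 1)) • f s (xbar s) := by
  classical
  -- constants
  set δ : ℝ := (α / (4 * (c * L))) ^ (α⁻¹) with hδdef
  have hδpos : 0 < δ := Real.rpow_pos_of_pos (by positivity) _
  have hδα : δ ^ α = α / (4 * (c * L)) := by
    rw [hδdef, ← Real.rpow_mul (by positivity), inv_mul_cancel₀ hα.ne', Real.rpow_one]
  set lam : ℝ := max 1 (4 * (c * L) * δ ^ (α - 1)) with hlamdef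
  have hlam1 : (1:ℝ) ≤ lam := le_max_left _ _
  have hlampos : (0:ℝ) < lam := lt_of_lt_of_le one_pos hlam1
  have hlamge : 4 * (c * L) * δ ^ (α - 1) ≤ lam := le_max_right _ _
  have hq1 : c * L * (δ ^ α / α) = 1 / 4 := by
    rw [hδα]
    field_simp
  have hq2 : c * L * (δ ^ (α - 1) / lam) ≤ 1 / 4 := by
    have h1 : c * L * (δ ^ (α - 1) / lam) = c * L * δ ^ (α - 1) / lam := by ring
    rw [h1, div_le_iff₀ hlampos]
    linarith
  -- the space and the operator
  set X := C(Icc (0:ℝ) t_f, E) with hX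
  let ue : X → ℝ → E := fun u s => u (Set.projIcc 0 t_f ht_f.le s)
  have hue_cont : ∀ u : X, Continuous (ue u) := fun u =>
    u.continuous.comp continuous_projIcc
  let gm : X → ℝ → E := fun u s => f s (Real.exp (lam * s) • ue u s)
  have hgm_cont : ∀ u : X, Continuous (gm u) := fun u =>
    hfc.comp (continuous_id.prodMk
      ((Real.continuous_exp.comp (continuous_const.mul continuous_id)).smul (hue_cont u)))
  let Tfun : X → ℝ → E := fun u τ => Real.exp (-(lam * τ)) •
    (x₀ + c • ∫ s in (0:ℝ)..τ, (τ - s) ^ (α - 1) • gm u s)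
  have hT_cont : ∀ u : X, ContinuousOn (Tfun u) (Icc 0 t_f) := fun u =>
    ((Real.continuous_exp.comp
      ((continuous_const.mul continuous_id).neg)).continuousOn).smul
      (continuousOn_const.add ((I_continuousOn hα hα1 (hgm_cont u)).const_smul c))
  let S : X → X := fun u => ⟨(Icc (0:ℝ) t_f).restrict (Tfun u), (hT_cont u).restrict⟩
  -- Lipschitz bound for gm differences
  have hgm_lip : ∀ u u' : X, ∀ s ∈ Icc (0:ℝ) t_f,
      ‖gm u s - gm u' s‖ ≤ (L * dist u u') * Real.exp (lam * s) := by
    intro u u' s hs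
    have h1 := hf s hs (Real.exp (lam * s) • ue u s) (Real.exp (lam * s) • ue u' s)
    have h2 : Real.exp (lam * s) • ue u s - Real.exp (lam * s) • ue u' s =
        Real.exp (lam * s) • (ue u s - ue u' s) := (smul_sub _ _ _).symm
    rw [h2, norm_smul, Real.norm_eq_abs, abs_of_pos (Real.exp_pos _)] at h1
    have h3 : ‖ue u s - ue u' s‖ ≤ dist u u' := by
      rw [← dist_eq_norm]
      exact ContinuousMap.dist_apply_le_dist _
    refine h1.trans ?_
    have : L * (Real.exp (lam * s) * ‖ue u s - ue u' s‖) ≤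
        L * (Real.exp (lam * s) * dist u u') := by
      refine mul_le_mul_of_nonneg_left ?_ hL.le
      exact mul_le_mul_of_nonneg_left h3 (Real.exp_pos _).le
    calc L * (Real.exp (lam * s) * ‖ue u s - ue u' s‖)
        ≤ L * (Real.exp (lam * s) * dist u u') := this
      _ = (L * dist u u') * Real.exp (lam * s) := by ring
  -- contraction estimate
  have hSdist : ∀ u u' : X, dist (S u) (S u') ≤ (1 / 2 : ℝ) * dist u u' := by
    intro u u'
    have hDnn : (0:ℝ) ≤ dist u u' := dist_nonneg
    rw [ContinuousMap.dist_le (by positivity)]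
    rintro ⟨t, ht⟩
    rw [dist_eq_norm]
    have hsub : S u ⟨t, ht⟩ - S u' ⟨t, ht⟩ = Real.exp (-(lam * t)) •
        (c • ((∫ s in (0:ℝ)..t, (t - s) ^ (α - 1) • gm u s) -
          ∫ s in (0:ℝ)..t, (t - s) ^ (α - 1) • gm u' s)) := by
      show Tfun u t - Tfun u' t = _
      rw [smul_sub, smul_sub]
      simp only [Tfun]
      rw [← smul_sub, ← smul_sub, add_sub_add_left_eq_sub, smul_sub]
    rw [hsub]
    have hdi : (∫ s in (0:ℝ)..t, (t - s) ^ (α - 1) • gm u s) -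
        ∫ s in (0:ℝ)..t, (t - s) ^ (α - 1) • gm u' s =
        ∫ s in (0:ℝ)..t, (t - s) ^ (α - 1) • (gm u s - gm u' s) := by
      rw [← intervalIntegral.integral_sub (smul_kernel_ii hα (hgm_cont u))
        (smul_kernel_ii hα (hgm_cont u'))]
      congr 1
      funext s
      rw [smul_sub]
    rw [hdi]
    have hwb := weighted_bound (δ := δ) (M := L * dist u u') hα hα1 hδpos hlampos ht.1
      ((hgm_cont u).sub (hgm_cont u')) (by positivity)
      (fun s hs => hgm_lip u u' s ⟨hs.1, hs.2.trans ht.2⟩)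
    rw [norm_smul, norm_smul, Real.norm_eq_abs, Real.norm_eq_abs,
      abs_of_pos (Real.exp_pos _), abs_of_pos hc]
    have hee : Real.exp (-(lam * t)) * Real.exp (lam * t) = 1 := by
      rw [← Real.exp_add]
      simp
    have hkey : Real.exp (-(lam * t)) * (c *
        ‖∫ s in (0:ℝ)..t, (t - s) ^ (α - 1) • (gm u s - gm u' s)‖) ≤
        c * L * dist u u' * (δ ^ α / α + δ ^ (α - 1) / lam) := by
      have h4 : Real.exp (-(lam * t)) * (c *
          ‖∫ s in (0:ℝ)..t, (t - s) ^ (α - 1) • (gm u s - gm u' s)‖) ≤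
          Real.exp (-(lam * t)) * (c * ((L * dist u u') * Real.exp (lam * t) *
            (δ ^ α / α + δ ^ (α - 1) / lam))) := by
        refine mul_le_mul_of_nonneg_left ?_ (Real.exp_pos _).le
        exact mul_le_mul_of_nonneg_left hwb hc.le
      refine h4.trans ?_
      have : Real.exp (-(lam * t)) * (c * ((L * dist u u') * Real.exp (lam * t) *
          (δ ^ α / α + δ ^ (α - 1) / lam))) =
          (Real.exp (-(lam * t)) * Real.exp (lam * t)) *
            (c * L * dist u u' * (δ ^ α / α + δ ^ (α - 1) / lam)) := by ring
      rw [this, hee, one_mul]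
    refine hkey.trans ?_
    have hsum : c * L * (δ ^ α / α + δ ^ (α - 1) / lam) ≤ 1 / 2 := by
      have := hq1
      have := hq2
      nlinarith [hq1, hq2]
    calc c * L * dist u u' * (δ ^ α / α + δ ^ (α - 1) / lam)
        = (c * L * (δ ^ α / α + δ ^ (α - 1) / lam)) * dist u u' := by ring
      _ ≤ (1 / 2) * dist u u' := mul_le_mul_of_nonneg_right hsum hDnn
  have hcontr : ContractingWith (1 / 2 : ℝ≥0) S := by
    constructor
    · rw [← NNReal.coe_lt_coe]
      norm_num
    · refine LipschitzWith.of_dist_le_mul fun u u' => ?_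
      have hc2 : ((1 / 2 : ℝ≥0) : ℝ) = 1 / 2 := by norm_num
      rw [hc2]
      exact hSdist u u'
  haveI : Nonempty X := ⟨ContinuousMap.const _ 0⟩
  set ust := hcontr.fixedPoint S with hustdef
  have hfix : S ust = ust := hcontr.fixedPoint_isFixedPt
  refine ⟨fun s => Real.exp (lam * s) • ue ust s,
    (Real.continuous_exp.comp (continuous_const.mul continuous_id)).smul (hue_cont ust), ?_⟩
  intro t ht
  have h1 : ust ⟨t, ht⟩ = Tfun ust t := by
    conv_lhs => rw [← hfix]
    rfl
  have h2 : ue ust t = ust ⟨t, ht⟩ := by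
    simp only [ue, Set.projIcc_of_mem ht_f.le ht]
  show Real.exp (lam * t) • ue ust t =
    x₀ + c • ∫ s in (0:ℝ)..t, (t - s) ^ (α - 1) • f s (Real.exp (lam * s) • ue ust s)
  rw [h2, h1]
  show Real.exp (lam * t) • (Real.exp (-(lam * t)) •
    (x₀ + c • ∫ s in (0:ℝ)..t, (t - s) ^ (α - 1) • gm ust s)) = _
  rw [smul_smul, ← Real.exp_add]
  have he : lam * t + -(lam * t) = 0 := by ring
  rw [he, Real.exp_zero, one_smul]

end VolterraAux

/-- Existence part of Lemma 2: under the bound `‖A(t)x‖ ≤ μ₁‖x‖`, a Lipschitz and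
continuous `G` and a continuous `v`, for every initial value `x₀` there is a continuous
solution on `[0, t_f]` of the Volterra integral equation
`x̄(t) = x₀ + (1/Γ(α)) ∫₀ᵗ (t-s)^(α-1) (A(s) x̄(s) + G(x̄(s), s) + v(s)) ds`,
equivalent to the fractional IVP `ᶜDᵅ x̄ = A x̄ + G(x̄,·) + v`, `x̄(0) = x₀`. -/
theorem volterra_existence
    (α : ℝ) (hα : α ∈ Set.Ioc (0 : ℝ) 1) (t_f : ℝ) (ht_f : 0 < t_f) (q : ℕ)
    (μ₁ μ₂ : ℝ) (hμ₁ : 0 < μ₁) (hμ₂ : 0 < μ₂)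
    (A : ℝ → Matrix (Fin q) (Fin q) ℝ) (hAc : Continuous A)
    (hA : ∀ t ∈ Set.Icc (0 : ℝ) t_f, ∀ x : Fin q → ℝ, ‖A t *ᵥ x‖ ≤ μ₁ * ‖x‖)
    (G : (Fin q → ℝ) → ℝ → Fin q → ℝ)
    (hGc : Continuous fun p : (Fin q → ℝ) × ℝ => G p.1 p.2)
    (hG : ∀ t ∈ Set.Icc (0 : ℝ) t_f, ∀ x y : Fin q → ℝ,
      ‖G x t - G y t‖ ≤ μ₂ * ‖x - y‖)
    (v : ℝ → Fin q → ℝ) (hv : Continuous v) (x₀ : Fin q → ℝ) :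
    ∃ xbar : ℝ → Fin q → ℝ, ContinuousOn xbar (Set.Icc (0 : ℝ) t_f) ∧
      ∀ t ∈ Set.Icc (0 : ℝ) t_f,
        xbar t = x₀ + (1 / Real.Gamma α) •
          ∫ s in (0 : ℝ)..t,
            ((t - s) ^ (α - 1)) • (A s *ᵥ xbar s + G (xbar s) s + v s) := by
  obtain ⟨hα0, hα1⟩ := hα
  have hΓ : 0 < Real.Gamma α := Real.Gamma_pos_of_pos hα0
  have hfc : Continuous fun p : ℝ × (Fin q → ℝ) => A p.1 *ᵥ p.2 + G p.2 p.1 + v p.1 := by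
    refine (((hAc.comp continuous_fst).matrix_mulVec continuous_snd).add
      (hGc.comp (continuous_snd.prodMk continuous_fst))).add (hv.comp continuous_fst)
  have hf : ∀ s ∈ Set.Icc (0:ℝ) t_f, ∀ x y : Fin q → ℝ,
      ‖(A s *ᵥ x + G x s + v s) - (A s *ᵥ y + G y s + v s)‖ ≤ (μ₁ + μ₂) * ‖x - y‖ := by
    intro s hs x y
    have hsplit : (A s *ᵥ x + G x s + v s) - (A s *ᵥ y + G y s + v s) =
        (A s *ᵥ x - A s *ᵥ y) + (G x s - G y s) := by abel
    rw [hsplit]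
    have h1 : ‖A s *ᵥ x - A s *ᵥ y‖ ≤ μ₁ * ‖x - y‖ := by
      rw [← Matrix.mulVec_sub]
      exact hA s hs (x - y)
    have h2 := hG s hs x y
    calc ‖(A s *ᵥ x - A s *ᵥ y) + (G x s - G y s)‖
        ≤ ‖A s *ᵥ x - A s *ᵥ y‖ + ‖G x s - G y s‖ := norm_add_le _ _
      _ ≤ μ₁ * ‖x - y‖ + μ₂ * ‖x - y‖ := add_le_add h1 h2
      _ = (μ₁ + μ₂) * ‖x - y‖ := by ring
  obtain ⟨xbar, hxc, hxe⟩ := volterra_aux α hα0 hα1 t_f ht_f (1 / Real.Gamma α) (μ₁ + μ₂)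
    (by positivity) (by positivity)
    (fun s x => A s *ᵥ x + G x s + v s) hfc hf x₀
  exact ⟨xbar, hxc.continuousOn, hxe⟩
end
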